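/- arXiv:2511.21628 — 5 statements merged into one kernel-verified Lean document; each statement's English description precedes it below -/
import Mathlib

section
/- Let n,s,ℓ,c be positive integers such that n=2s+c=3s-ℓ and c,ℓ∈[s-1]. Then none of the families P(s,ℓ), P'(s,ℓ), Q(s,ℓ), W(s,ℓ) contains an s-matching; that is, each of these families has matching number strictly less than s. -/
open Finset

/-- The ground set `[n] = {1, 2, …, n}`. -/
def ground (n : ℕ) : Finset ℕ := Finset.Icc 1 n

-- The matching number `ν(F)` of a family: the size of the largest pairwise
-- disjoint subfamily of `F`.
open Classical in
noncomputable def matchingNumber (F : Finset (Finset ℕ)) : ℕ :=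
  (F.powerset.filter fun M : Finset (Finset ℕ) =>
      (M : Set (Finset ℕ)).Pairwise fun A B => Disjoint A B).sup Finset.card

-- `e(n, s)`: the maximum size of a family `F ⊆ 2^[n]` with `ν(F) < s`.
open Classical in
noncomputable def extremalNumber (n s : ℕ) : ℕ :=
  (((ground n).powerset.powerset).filter fun F => matchingNumber F < s).sup Finset.card

/-- The family `P(s, ℓ) = {P ⊆ [n] : |P| + |P ∩ [ℓ-1]| ≥ 3}` (it depends only on `n, ℓ`). -/
def famP (n l : ℕ) : Finset (Finset ℕ) :=
  (ground n).powerset.filter fun A => 3 ≤ A.card + (A ∩ Finset.Icc 1 (l - 1)).card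

/-- The family `P'(s, ℓ)`: all subsets of `[n]` of size at least `3` together with
all `2`-element subsets of `[2ℓ-1]`. -/
def famP' (n l : ℕ) : Finset (Finset ℕ) :=
  ((ground n).powerset.filter fun A => 3 ≤ A.card) ∪
    (Finset.Icc 1 (2 * l - 1)).powersetCard 2

/-- The family `Q(s, ℓ)`: all subsets of `[n]` of size at least `3` together with all
`2`-element subsets of `[s+ℓ-1]`, with all `3`-element subsets of `[s+ℓ, n]` removed. -/
def famQ (n s l : ℕ) : Finset (Finset ℕ) :=
  (((ground n).powerset.filter fun A => 3 ≤ A.card) ∪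
      (Finset.Icc 1 (s + l - 1)).powersetCard 2) \
    (Finset.Icc (s + l) n).powersetCard 3

/-- The family `W(s, ℓ) = {P ⊆ [n] : |P ∩ [2s-1]| ≥ 2}`. -/
def famW (n s : ℕ) : Finset (Finset ℕ) :=
  (ground n).powerset.filter fun A => 2 ≤ (A ∩ Finset.Icc 1 (2 * s - 1)).card

/-- The `(i ← j)`-shift of a set. -/
def shiftSet (i j : ℕ) (A : Finset ℕ) : Finset ℕ :=
  if j ∈ A ∧ i ∉ A then insert i (A.erase j) else A

/-- The `(i ← j)`-shift of a family. -/
def shiftFam (i j : ℕ) (F : Finset (Finset ℕ)) : Finset (Finset ℕ) :=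
  F.image (shiftSet i j) ∪ F.filter fun A => shiftSet i j A ∈ F

/-- A family `F ⊆ 2^[n]` is shifted if it is invariant under all `(i ← j)`-shifts
with `1 ≤ i < j ≤ n`. -/
def IsShifted (n : ℕ) (F : Finset (Finset ℕ)) : Prop :=
  ∀ i j : ℕ, 1 ≤ i → i < j → j ≤ n → shiftFam i j F = F

/-- `A` can be shifted to `B`: some sequence of `(a ← b)`-shifts with `a < b`
transforms `A` into `B`. -/
def ShiftsTo (n : ℕ) (A B : Finset ℕ) : Prop :=
  Relation.ReflTransGen
    (fun X Y => ∃ a b : ℕ, 1 ≤ a ∧ a < b ∧ b ≤ n ∧ Y = shiftSet a b X) A B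

/-- A family `F ⊆ 2^[n]` is an up-set if it is closed under supersets inside `[n]`. -/
def IsUpSet (n : ℕ) (F : Finset (Finset ℕ)) : Prop :=
  ∀ A ∈ F, ∀ B : Finset ℕ, A ⊆ B → B ⊆ ground n → B ∈ F

/-- The `k`-th layer of a family: its `k`-element members (as subsets of `[n]`). -/
def layer (n : ℕ) (F : Finset (Finset ℕ)) (k : ℕ) : Finset (Finset ℕ) :=
  F ∩ (ground n).powersetCard k

/-- `y_F(k)`: the number of `k`-element subsets of `[n]` that do not belong to `F`. -/
def yF (n : ℕ) (F : Finset (Finset ℕ)) (k : ℕ) : ℕ :=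
  Nat.choose n k - (layer n F k).card

/-- The defining condition for `d(F)` (with parameter `ℓ`). -/
def DCond (l : ℕ) (F : Finset (Finset ℕ)) (d : ℕ) : Prop :=
  (Even d ∧ ∃ i ∈ Finset.Icc 1 (l + d / 2), ({i, 2 * l + d + 1 - i} : Finset ℕ) ∉ F) ∨
  (Odd d ∧ (({1, 2 * l + d} : Finset ℕ) ∉ F ∨
    ∃ i ∈ Finset.Icc 3 (l + (d + 1) / 2), ({i, 2 * l + d + 2 - i} : Finset ℕ) ∉ F))

/-- `d(F)`: the smallest `d ≥ 0` satisfying the condition `DCond ℓ F d`. -/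
noncomputable def dF (l : ℕ) (F : Finset (Finset ℕ)) : ℕ := sInf {d : ℕ | DCond l F d}

lemma aux_mn_lt {F : Finset (Finset ℕ)} {s : ℕ} (hs : 0 < s)
    (h : ∀ M : Finset (Finset ℕ), M ⊆ F →
      ((M : Set (Finset ℕ)).Pairwise fun A B => Disjoint A B) → M.card < s) :
    matchingNumber F < s := by
  classical
  unfold matchingNumber
  rw [Finset.sup_lt_iff hs]
  intro M hM
  simp only [Finset.mem_filter, Finset.mem_powerset] at hM
  exact h M hM.1 hM.2

lemma aux_pairwise_inter {M : Finset (Finset ℕ)}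
    (hd : (M : Set (Finset ℕ)).Pairwise fun A B => Disjoint A B) (I : Finset ℕ) :
    ∑ A ∈ M, (A ∩ I).card ≤ I.card := by
  rw [← Finset.card_biUnion (fun x hx y hy hxy =>
    Finset.disjoint_of_subset_left Finset.inter_subset_left
      (Finset.disjoint_of_subset_right Finset.inter_subset_left (hd hx hy hxy)))]
  exact Finset.card_le_card (Finset.biUnion_subset.mpr fun A _ => Finset.inter_subset_right)

lemma aux_sum_card {n : ℕ} {M : Finset (Finset ℕ)}
    (hd : (M : Set (Finset ℕ)).Pairwise fun A B => Disjoint A B)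
    (hg : ∀ A ∈ M, A ⊆ ground n) :
    ∑ A ∈ M, A.card ≤ n := by
  calc ∑ A ∈ M, A.card = ∑ A ∈ M, (A ∩ ground n).card :=
        Finset.sum_congr rfl fun A hA => by rw [Finset.inter_eq_left.mpr (hg A hA)]
    _ ≤ (ground n).card := aux_pairwise_inter hd (ground n)
    _ = n := by simp [ground, Nat.card_Icc]

theorem stmt_4 (n s l c : ℕ) (hn0 : 0 < n) (hs0 : 0 < s) (hl0 : 1 ≤ l) (hc0 : 1 ≤ c)
    (hls : l ≤ s - 1) (hcs : c ≤ s - 1) (hn1 : n = 2 * s + c) (hn2 : n + l = 3 * s) :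
    matchingNumber (famP n l) < s ∧ matchingNumber (famP' n l) < s ∧
      matchingNumber (famQ n s l) < s ∧ matchingNumber (famW n s) < s := by
  classical
  have hs2 : 2 ≤ s := by omega
  refine ⟨?_, ?_, ?_, ?_⟩
  · -- famP
    apply aux_mn_lt hs0
    intro M hMF hd
    by_contra hcard
    push_neg at hcard
    set J := Finset.Icc 1 (l - 1) with hJ
    have hmem : ∀ A ∈ M, A ⊆ ground n ∧ 3 ≤ A.card + (A ∩ J).card := by
      intro A hA
      have := hMF hA
      simp only [famP, Finset.mem_filter, Finset.mem_powerset] at this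
      exact this
    set T := M.filter (fun A => A.card ≤ 2) with hT
    -- each small set meets J
    have hT1 : ∀ A ∈ T, 1 ≤ (A ∩ J).card := by
      intro A hA
      rw [hT, Finset.mem_filter] at hA
      have h1 := (hmem A hA.1).2
      have h2 : (A ∩ J).card ≤ A.card := Finset.card_le_card Finset.inter_subset_left
      omega
    have hTsum : T.card * 1 ≤ ∑ A ∈ T, (A ∩ J).card := by
      simpa using Finset.card_nsmul_le_sum T _ 1 hT1
    have hTJ : ∑ A ∈ T, (A ∩ J).card ≤ l - 1 := by
      have hsub : (↑T : Set (Finset ℕ)) ⊆ ↑M := by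
        rw [hT]; exact Finset.coe_subset.mpr (Finset.filter_subset _ M)
      have := aux_pairwise_inter (hd.mono hsub) J
      simpa [hJ, Nat.card_Icc] using this
    have hTl : T.card ≤ l - 1 := by omega
    -- size lower bounds
    have hTlow : T.card * 2 ≤ ∑ A ∈ T, A.card := by
      refine Finset.card_nsmul_le_sum T _ 2 ?_
      intro A hA
      rw [hT, Finset.mem_filter] at hA
      have h1 := (hmem A hA.1).2
      have h2 : (A ∩ J).card ≤ A.card := Finset.card_le_card Finset.inter_subset_left
      omega
    have hBlow : (M.filter (fun A => ¬ A.card ≤ 2)).card * 3 ≤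
        ∑ A ∈ M.filter (fun A => ¬ A.card ≤ 2), A.card := by
      refine Finset.card_nsmul_le_sum _ _ 3 ?_
      intro A hA
      rw [Finset.mem_filter] at hA
      omega
    have hsplit : ∑ A ∈ T, A.card + ∑ A ∈ M.filter (fun A => ¬ A.card ≤ 2), A.card
        = ∑ A ∈ M, A.card := Finset.sum_filter_add_sum_filter_not M _ _
    have hcards : T.card + (M.filter (fun A => ¬ A.card ≤ 2)).card = M.card :=
      Finset.card_filter_add_card_filter_not _
    have hn : ∑ A ∈ M, A.card ≤ n := aux_sum_card hd (fun A hA => (hmem A hA).1)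
    omega
  · -- famP'
    apply aux_mn_lt hs0
    intro M hMF hd
    by_contra hcard
    push_neg at hcard
    set I := Finset.Icc 1 (2 * l - 1) with hI
    have hmem : ∀ A ∈ M, (A ⊆ ground n ∧ 3 ≤ A.card) ∨ (A ⊆ I ∧ A.card = 2) := by
      intro A hA
      have := hMF hA
      simp only [famP', Finset.mem_union, Finset.mem_filter, Finset.mem_powerset,
        Finset.mem_powersetCard] at this
      tauto
    have hIg : I ⊆ ground n := by
      rw [hI]
      exact Finset.Icc_subset_Icc le_rfl (by omega)
    have hg : ∀ A ∈ M, A ⊆ ground n := by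
      intro A hA
      rcases hmem A hA with h | h
      · exact h.1
      · exact h.1.trans hIg
    set T := M.filter (fun A => A.card ≤ 2) with hT
    have hT2 : ∀ A ∈ T, (A ∩ I).card = 2 ∧ A.card = 2 := by
      intro A hA
      rw [hT, Finset.mem_filter] at hA
      rcases hmem A hA.1 with h | h
      · omega
      · rw [Finset.inter_eq_left.mpr h.1]; exact ⟨h.2, h.2⟩
    have hTsum : T.card * 2 ≤ ∑ A ∈ T, (A ∩ I).card := by
      refine Finset.card_nsmul_le_sum T _ 2 ?_
      intro A hA; exact (hT2 A hA).1.ge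
    have hTI : ∑ A ∈ T, (A ∩ I).card ≤ 2 * l - 1 := by
      have hsub : (↑T : Set (Finset ℕ)) ⊆ ↑M := by
        rw [hT]; exact Finset.coe_subset.mpr (Finset.filter_subset _ M)
      have := aux_pairwise_inter (hd.mono hsub) I
      simpa [hI, Nat.card_Icc] using this
    have hTlow : T.card * 2 ≤ ∑ A ∈ T, A.card := by
      refine Finset.card_nsmul_le_sum T _ 2 ?_
      intro A hA; exact (hT2 A hA).2.ge
    have hBlow : (M.filter (fun A => ¬ A.card ≤ 2)).card * 3 ≤
        ∑ A ∈ M.filter (fun A => ¬ A.card ≤ 2), A.card := by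
      refine Finset.card_nsmul_le_sum _ _ 3 ?_
      intro A hA
      rw [Finset.mem_filter] at hA
      omega
    have hsplit : ∑ A ∈ T, A.card + ∑ A ∈ M.filter (fun A => ¬ A.card ≤ 2), A.card
        = ∑ A ∈ M, A.card := Finset.sum_filter_add_sum_filter_not M _ _
    have hcards : T.card + (M.filter (fun A => ¬ A.card ≤ 2)).card = M.card :=
      Finset.card_filter_add_card_filter_not _
    have hn : ∑ A ∈ M, A.card ≤ n := aux_sum_card hd hg
    omega
  · -- famQ
    apply aux_mn_lt hs0
    intro M hMF hd
    by_contra hcard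
    push_neg at hcard
    set I := Finset.Icc 1 (s + l - 1) with hI
    have hmem : ∀ A ∈ M, ((A ⊆ ground n ∧ 3 ≤ A.card) ∨ (A ⊆ I ∧ A.card = 2)) ∧
        ¬ (A ⊆ Finset.Icc (s + l) n ∧ A.card = 3) := by
      intro A hA
      have := hMF hA
      simp only [famQ, Finset.mem_sdiff, Finset.mem_union, Finset.mem_filter,
        Finset.mem_powerset, Finset.mem_powersetCard] at this
      tauto
    have hIg : I ⊆ ground n := by
      rw [hI]
      exact Finset.Icc_subset_Icc le_rfl (by omega)
    have hg : ∀ A ∈ M, A ⊆ ground n := by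
      intro A hA
      rcases (hmem A hA).1 with h | h
      · exact h.1
      · exact h.1.trans hIg
    set T2 := M.filter (fun A => A.card ≤ 2) with hT2
    set R := M.filter (fun A => ¬ A.card ≤ 2) with hR
    set T3 := R.filter (fun A => A.card = 3) with hT3
    set T4 := R.filter (fun A => ¬ A.card = 3) with hT4
    -- small sets: 2-subsets of I
    have h2 : ∀ A ∈ T2, (A ∩ I).card = 2 ∧ A.card = 2 := by
      intro A hA
      rw [hT2, Finset.mem_filter] at hA
      rcases (hmem A hA.1).1 with h | h
      · omega
      · rw [Finset.inter_eq_left.mpr h.1]; exact ⟨h.2, h.2⟩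
    -- 3-sets meet I
    have h3 : ∀ A ∈ T3, 1 ≤ (A ∩ I).card := by
      intro A hA
      rw [hT3, Finset.mem_filter, hR, Finset.mem_filter] at hA
      obtain ⟨⟨hAM, _⟩, hA3⟩ := hA
      have hnot := (hmem A hAM).2
      have hns : ¬ A ⊆ Finset.Icc (s + l) n := fun hsub => hnot ⟨hsub, hA3⟩
      obtain ⟨x, hxA, hxn⟩ := Finset.not_subset.mp hns
      have hxg : x ∈ ground n := hg A hAM hxA
      rw [ground, Finset.mem_Icc] at hxg
      rw [Finset.mem_Icc] at hxn
      have hxI : x ∈ A ∩ I := by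
        rw [Finset.mem_inter, hI, Finset.mem_Icc]
        exact ⟨hxA, hxg.1, by omega⟩
      exact Finset.card_pos.mpr ⟨x, hxI⟩
    -- element count in I
    have hwI : ∑ A ∈ M, (A ∩ I).card ≤ s + l - 1 := by
      have := aux_pairwise_inter hd I
      simpa [hI, Nat.card_Icc] using this
    have hwsplit : ∑ A ∈ T2, (A ∩ I).card + ∑ A ∈ R, (A ∩ I).card
        = ∑ A ∈ M, (A ∩ I).card := Finset.sum_filter_add_sum_filter_not M _ _
    have hw2 : T2.card * 2 ≤ ∑ A ∈ T2, (A ∩ I).card := by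
      refine Finset.card_nsmul_le_sum T2 _ 2 ?_
      intro A hA; exact (h2 A hA).1.ge
    have hw3 : T3.card * 1 ≤ ∑ A ∈ T3, (A ∩ I).card := by
      simpa using Finset.card_nsmul_le_sum T3 _ 1 h3
    have hw3' : ∑ A ∈ T3, (A ∩ I).card ≤ ∑ A ∈ R, (A ∩ I).card :=
      Finset.sum_le_sum_of_subset (by rw [hT3]; exact Finset.filter_subset _ _)
    -- total size count
    have hn : ∑ A ∈ M, A.card ≤ n := aux_sum_card hd hg
    have hssplit : ∑ A ∈ T2, A.card + ∑ A ∈ R, A.card = ∑ A ∈ M, A.card :=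
      Finset.sum_filter_add_sum_filter_not M _ _
    have hssplit2 : ∑ A ∈ T3, A.card + ∑ A ∈ T4, A.card = ∑ A ∈ R, A.card :=
      Finset.sum_filter_add_sum_filter_not R _ _
    have hs2l : T2.card * 2 ≤ ∑ A ∈ T2, A.card := by
      refine Finset.card_nsmul_le_sum T2 _ 2 ?_
      intro A hA; exact (h2 A hA).2.ge
    have hs3l : T3.card * 3 ≤ ∑ A ∈ T3, A.card := by
      refine Finset.card_nsmul_le_sum T3 _ 3 ?_
      intro A hA
      rw [hT3, Finset.mem_filter] at hA
      omega
    have hs4l : T4.card * 4 ≤ ∑ A ∈ T4, A.card := by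
      refine Finset.card_nsmul_le_sum T4 _ 4 ?_
      intro A hA
      rw [hT4, Finset.mem_filter, hR, Finset.mem_filter] at hA
      omega
    have hcards : T2.card + R.card = M.card :=
      Finset.card_filter_add_card_filter_not _
    have hcards2 : T3.card + T4.card = R.card :=
      Finset.card_filter_add_card_filter_not _
    omega
  · -- famW
    apply aux_mn_lt hs0
    intro M hMF hd
    by_contra hcard
    push_neg at hcard
    set I := Finset.Icc 1 (2 * s - 1) with hI
    have hmem : ∀ A ∈ M, 2 ≤ (A ∩ I).card := by
      intro A hA
      have := hMF hA
      simp only [famW, Finset.mem_filter, Finset.mem_powerset] at this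
      exact this.2
    have h1 : ∑ A ∈ M, (A ∩ I).card ≤ 2 * s - 1 := by
      have := aux_pairwise_inter hd I
      simpa [hI, Nat.card_Icc] using this
    have h2 : M.card * 2 ≤ ∑ A ∈ M, (A ∩ I).card :=
      Finset.card_nsmul_le_sum M _ 2 hmem
    omega
end

section
/- If F ⊆ 2^[n] is a shifted family and {i,j} ∉ F with i < j, then y_F(2) ≥ (n+j-2i)(n-j+1)/2. Moreover, equality is achieved only if F^{(2)} (the family of 2-element sets of F) consists exactly of all two-element subsets of [n] that cannot be transformed into {i,j} by a sequence of (a←b)-shifts with a<b. -/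
open Finset

lemma pair_eq_pair_iff {a b a' b' : ℕ} (h1 : a < b) (h2 : a' < b') :
    ({a, b} : Finset ℕ) = {a', b'} ↔ a = a' ∧ b = b' := by
  constructor
  · intro h
    have ha : a ∈ ({a', b'} : Finset ℕ) := h ▸ (by simp)
    have hb : b ∈ ({a', b'} : Finset ℕ) := h ▸ (by simp)
    have ha' : a' ∈ ({a, b} : Finset ℕ) := h ▸ (by simp)
    have hb' : b' ∈ ({a, b} : Finset ℕ) := h ▸ (by simp)
    simp only [Finset.mem_insert, Finset.mem_singleton] at ha hb ha' hb'
    omega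
  · rintro ⟨rfl, rfl⟩; rfl

lemma erase_pair_left {a b : ℕ} (h : a ≠ b) : ({a, b} : Finset ℕ).erase a = {b} := by
  rw [show ({a, b} : Finset ℕ) = insert a {b} from rfl,
    Finset.erase_insert (by simpa using h)]

lemma erase_pair_right {a b : ℕ} (h : a ≠ b) : ({a, b} : Finset ℕ).erase b = {a} := by
  rw [Finset.pair_comm]; exact erase_pair_left h.symm

/-- Forward characterization: anything that shifts to `{i,j}` is a pair `{a,b}`
with `i ≤ a < b`, `j ≤ b`. -/
lemma shiftsTo_pair {n i j : ℕ} (hij : i < j) {A : Finset ℕ}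
    (h : ShiftsTo n A {i, j}) :
    ∃ a b : ℕ, i ≤ a ∧ a < b ∧ j ≤ b ∧ A = {a, b} := by
  induction h using Relation.ReflTransGen.head_induction_on with
  | refl => exact ⟨i, j, le_refl _, hij, le_refl _, rfl⟩
  | head hstep _ ih =>
    obtain ⟨a, b, hia, hab, hjb, hY⟩ := ih
    obtain ⟨p, q, hp, hpq, hqn, hYdef⟩ := hstep
    rename_i X Y _
    subst hYdef
    unfold shiftSet at hY
    by_cases hc : q ∈ X ∧ p ∉ X
    · rw [if_pos hc] at hY
      have hpY : p ∈ insert p (X.erase q) := Finset.mem_insert_self _ _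
      have hqY : q ∉ insert p (X.erase q) := by
        simp only [Finset.mem_insert]
        push_neg
        exact ⟨by omega, Finset.notMem_erase _ _⟩
      have hX : X = insert q ((insert p (X.erase q)).erase p) := by
        rw [Finset.erase_insert (fun hmem => hc.2 (Finset.mem_of_mem_erase hmem)),
          Finset.insert_erase hc.1]
      rw [hY] at hX hpY hqY
      simp only [Finset.mem_insert, Finset.mem_singleton] at hpY hqY
      rcases hpY with rfl | rfl
      · rw [erase_pair_left (by omega)] at hX
        rcases lt_or_gt_of_ne (show q ≠ b by omega) with hqb | hqb
        · exact ⟨q, b, by omega, hqb, hjb, hX⟩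
        · exact ⟨b, q, by omega, hqb, by omega, by rw [hX, Finset.pair_comm]⟩
      · rw [erase_pair_right (by omega)] at hX
        exact ⟨a, q, hia, by omega, by omega, by rw [hX, Finset.pair_comm]⟩
    · rw [if_neg hc] at hY
      exact ⟨a, b, hia, hab, hjb, hY⟩

/-- Backward: every such pair shifts to `{i,j}`. -/
lemma pair_shiftsTo {n i j a b : ℕ} (hi : 1 ≤ i) (hij : i < j)
    (hia : i ≤ a) (hab : a < b) (hjb : j ≤ b) (hbn : b ≤ n) :
    ShiftsTo n ({a, b} : Finset ℕ) {i, j} := by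
  have h1 : ShiftsTo n ({a, b} : Finset ℕ) {i, b} := by
    rcases eq_or_lt_of_le hia with rfl | hia'
    · exact Relation.ReflTransGen.refl
    · refine Relation.ReflTransGen.single ⟨i, a, hi, hia', by omega, ?_⟩
      unfold shiftSet
      rw [if_pos ⟨Finset.mem_insert_self _ _, by simp; omega⟩,
        erase_pair_left (by omega)]
  have h2 : ShiftsTo n ({i, b} : Finset ℕ) {i, j} := by
    rcases eq_or_lt_of_le hjb with rfl | hjb'
    · exact Relation.ReflTransGen.refl
    · refine Relation.ReflTransGen.single ⟨j, b, by omega, hjb', hbn, ?_⟩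
      unfold shiftSet
      rw [if_pos ⟨by simp, by simp; omega⟩, erase_pair_right (by omega),
        Finset.pair_comm]
  exact h1.trans h2

lemma mem_of_shiftsTo {n : ℕ} {F : Finset (Finset ℕ)} (hsh : IsShifted n F)
    {A B : Finset ℕ} (h : ShiftsTo n A B) (hA : A ∈ F) : B ∈ F := by
  induction h with
  | refl => exact hA
  | tail _ hstep ih =>
    obtain ⟨a, b, ha, hab, hbn, hBdef⟩ := hstep
    rw [hBdef, ← hsh a b ha hab hbn]
    exact Finset.mem_union_left _ (Finset.mem_image_of_mem _ ih)

open Classical in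
lemma card_shiftsTo_set (n i j : ℕ) (hi : 1 ≤ i) (hij : i < j) (hj : j ≤ n) :
    (((ground n).powersetCard 2).filter fun A => ShiftsTo n A {i, j}).card =
      (n + j - 2 * i) * (n - j + 1) / 2 := by
  have hset : ((ground n).powersetCard 2).filter (fun A => ShiftsTo n A {i, j}) =
      (Finset.Icc j n).biUnion fun b =>
        (Finset.Icc i (b - 1)).image fun a => ({a, b} : Finset ℕ) := by
    ext A
    simp only [Finset.mem_filter, Finset.mem_powersetCard, Finset.mem_biUnion,
      Finset.mem_image, Finset.mem_Icc]
    constructor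
    · rintro ⟨⟨hsub, _⟩, hsh⟩
      obtain ⟨a, b, hia, hab, hjb, rfl⟩ := shiftsTo_pair hij hsh
      have hbmem : b ∈ ground n := hsub (by simp)
      rw [ground, Finset.mem_Icc] at hbmem
      exact ⟨b, ⟨hjb, hbmem.2⟩, a, ⟨hia, by omega⟩, rfl⟩
    · rintro ⟨b, ⟨hjb, hbn⟩, a, ⟨hia, hab⟩, rfl⟩
      have hab' : a < b := by omega
      refine ⟨⟨?_, ?_⟩, pair_shiftsTo hi hij hia hab' hjb hbn⟩
      · intro x hx
        simp only [Finset.mem_insert, Finset.mem_singleton] at hx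
        rw [ground, Finset.mem_Icc]
        rcases hx with rfl | rfl <;> omega
      · exact Finset.card_pair (by omega)
    
  rw [hset]
  have hdisj : ∀ b1 ∈ Finset.Icc j n, ∀ b2 ∈ Finset.Icc j n, b1 ≠ b2 →
      Disjoint ((Finset.Icc i (b1 - 1)).image fun a => ({a, b1} : Finset ℕ))
        ((Finset.Icc i (b2 - 1)).image fun a => ({a, b2} : Finset ℕ)) := by
    intro b1 hb1 b2 hb2 hne
    simp only [Finset.mem_Icc] at hb1 hb2
    rw [Finset.disjoint_left]
    rintro A hA1 hA2
    simp only [Finset.mem_image, Finset.mem_Icc] at hA1 hA2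
    obtain ⟨a1, ha1, rfl⟩ := hA1
    obtain ⟨a2, ha2, hEq⟩ := hA2
    rw [pair_eq_pair_iff (by omega) (by omega)] at hEq
    omega
  rw [Finset.card_biUnion hdisj]
  have hcards : ∀ b ∈ Finset.Icc j n,
      ((Finset.Icc i (b - 1)).image fun a => ({a, b} : Finset ℕ)).card = b - i := by
    intro b hb
    simp only [Finset.mem_Icc] at hb
    rw [Finset.card_image_of_injOn, Nat.card_Icc]
    · omega
    · intro a1 ha1 a2 ha2 hEq
      simp only [Finset.mem_coe, Finset.mem_Icc] at ha1 ha2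
      exact ((pair_eq_pair_iff (by omega) (by omega)).1 hEq).1
  rw [Finset.sum_congr rfl hcards]
  obtain ⟨d, rfl⟩ : ∃ d, j = i + d + 1 := ⟨j - i - 1, by omega⟩
  obtain ⟨m, rfl⟩ : ∃ m, n = i + d + 1 + m := ⟨n - (i + d + 1), by omega⟩
  have himg : Finset.Icc (i + d + 1) (i + d + 1 + m) =
      (Finset.range (m + 1)).image (· + (i + d + 1)) := by
    ext x
    simp only [Finset.mem_Icc, Finset.mem_image, Finset.mem_range]
    constructor
    · intro hx; exact ⟨x - (i + d + 1), by omega, by omega⟩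
    · rintro ⟨t, ht, rfl⟩; omega
  rw [himg, Finset.sum_image (by intro x _ y _ h; simp only at h; omega)]
  have : ∀ t ∈ Finset.range (m + 1), t + (i + d + 1) - i = t + (d + 1) := by
    intro t _; omega
  rw [Finset.sum_congr rfl this, Finset.sum_add_distrib, Finset.sum_const,
    Finset.card_range, smul_eq_mul]
  have hg := Finset.sum_range_id_mul_two (m + 1)
  have key : ((∑ t ∈ Finset.range (m + 1), t) + (m + 1) * (d + 1)) * 2 =
      (i + d + 1 + m + (i + d + 1) - 2 * i) * (i + d + 1 + m - (i + d + 1) + 1) := by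
    have h1 : (i + d + 1 + m + (i + d + 1) - 2 * i) = m + 2 * d + 2 := by omega
    have h2 : (i + d + 1 + m - (i + d + 1) + 1) = m + 1 := by omega
    have h3 : m + 1 - 1 = m := rfl
    rw [h1, h2, add_mul, hg, h3]
    ring
  omega

open Classical in
theorem stmt_5 (n i j : ℕ) (hi : 1 ≤ i) (hij : i < j) (hj : j ≤ n)
    (F : Finset (Finset ℕ)) (hF : ∀ A ∈ F, A ⊆ ground n) (hsh : IsShifted n F)
    (hmem : ({i, j} : Finset ℕ) ∉ F) :
    (n + j - 2 * i) * (n - j + 1) / 2 ≤ yF n F 2 ∧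
      (yF n F 2 = (n + j - 2 * i) * (n - j + 1) / 2 →
        layer n F 2 =
          ((ground n).powersetCard 2).filter fun A => ¬ ShiftsTo n A {i, j}) := by
  set S := ((ground n).powersetCard 2).filter (fun A => ShiftsTo n A {i, j}) with hS
  have hcardS : S.card = (n + j - 2 * i) * (n - j + 1) / 2 :=
    card_shiftsTo_set n i j hi hij hj
  have hground : (ground n).card = n := by rw [ground, Nat.card_Icc]; omega
  have hpow : ((ground n).powersetCard 2).card = n.choose 2 := by
    rw [Finset.card_powersetCard, hground]
  have hdisj : Disjoint S (layer n F 2) := by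
    rw [Finset.disjoint_left]
    intro A hAS hAL
    have hAF : A ∈ F := (Finset.mem_inter.1 hAL).1
    have : ({i, j} : Finset ℕ) ∈ F :=
      mem_of_shiftsTo hsh (Finset.mem_filter.1 hAS).2 hAF
    exact hmem this
  have hLsub : layer n F 2 ⊆ (ground n).powersetCard 2 := fun A hA =>
    (Finset.mem_inter.1 hA).2
  have hSsub : S ⊆ (ground n).powersetCard 2 := Finset.filter_subset _ _
  have hunion : S.card + (layer n F 2).card ≤ n.choose 2 := by
    rw [← Finset.card_union_of_disjoint hdisj, ← hpow]
    exact Finset.card_le_card (Finset.union_subset hSsub hLsub)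
  have hLle : (layer n F 2).card ≤ n.choose 2 := le_trans
    (Finset.card_le_card hLsub) hpow.le
  have hyF : yF n F 2 = n.choose 2 - (layer n F 2).card := rfl
  constructor
  · omega
  · intro heq
    have hLcard : (layer n F 2).card = n.choose 2 - S.card := by omega
    have hsub : layer n F 2 ⊆ (ground n).powersetCard 2 \ S := by
      intro A hA
      rw [Finset.mem_sdiff]
      exact ⟨hLsub hA, fun hAS => (Finset.disjoint_left.1 hdisj) hAS hA⟩
    have hcard_sdiff : ((ground n).powersetCard 2 \ S).card = n.choose 2 - S.card := by
      rw [Finset.card_sdiff_of_subset hSsub, hpow]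
    have : layer n F 2 = (ground n).powersetCard 2 \ S :=
      Finset.eq_of_subset_of_card_le hsub (by omega)
    rw [this, hS, ← Finset.filter_not]
end

section
/- Let s,ℓ,c be positive integers with c+ℓ=s and n=3s-ℓ=2ℓ+3c, and let d ≥ 0 be an even integer. If F ⊆ 2^[n] is a shifted family with d(F) ≤ d, then y_F(2) ≥ min{(4ℓ+3c+d−2)(3c−d+1)/2, (ℓ+3c−d/2+1)(ℓ+3c−d/2)/2}. Moreover, equality is achieved only if F^{(2)} = ([2ℓ+d−1] choose 2) or F^{(2)} = {F ∈ ([n] choose 2) : F ∩ [ℓ+d/2−1] ≠ ∅}. -/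
open Finset

section AuxStmt8

open Finset

lemma aux8_pair_eq {a b c e : ℕ} (h : ({a,b}:Finset ℕ) = {c,e}) :
    a=c∧b=e ∨ a=e∧b=c := by
  have ha : a ∈ ({c,e}:Finset ℕ) := h ▸ (by simp)
  have hb : b ∈ ({c,e}:Finset ℕ) := h ▸ (by simp)
  have hc : c ∈ ({a,b}:Finset ℕ) := h.symm ▸ (by simp)
  have he : e ∈ ({a,b}:Finset ℕ) := h.symm ▸ (by simp)
  simp only [Finset.mem_insert, Finset.mem_singleton] at ha hb hc he
  omega

lemma aux8_exists_lt_pair {A : Finset ℕ} (h : A.card = 2) :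
    ∃ a b : ℕ, a < b ∧ A = {a, b} := by
  obtain ⟨x, y, hxy, rfl⟩ := Finset.card_eq_two.1 h
  rcases hxy.lt_or_gt with h' | h'
  · exact ⟨x, y, h', rfl⟩
  · exact ⟨y, x, h', Finset.pair_comm x y⟩

lemma aux8_shift_mem {n : ℕ} {F : Finset (Finset ℕ)} (hsh : IsShifted n F)
    {i j : ℕ} (h1 : 1 ≤ i) (hij : i < j) (hjn : j ≤ n) {A : Finset ℕ} (hA : A ∈ F) :
    shiftSet i j A ∈ F := by
  rw [← hsh i j h1 hij hjn]
  exact Finset.mem_union_left _ (Finset.mem_image_of_mem _ hA)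

lemma aux8_pair_dom {n : ℕ} {F : Finset (Finset ℕ)} (hsh : IsShifted n F)
    {a b a' b' : ℕ} (h1 : 1 ≤ a') (haa : a' ≤ a) (hbb : b' ≤ b) (hab' : a' < b')
    (hab : a < b) (hbn : b ≤ n) (h : ({a,b}:Finset ℕ) ∈ F) : ({a',b'}:Finset ℕ) ∈ F := by
  have step1 : ({a', b} : Finset ℕ) ∈ F := by
    rcases eq_or_lt_of_le haa with rfl | hlt
    · exact h
    · have hm := aux8_shift_mem hsh h1 hlt (le_trans hab.le hbn) h
      have heq : shiftSet a' a {a, b} = {a', b} := by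
        rw [shiftSet, if_pos ⟨by simp, by simp; omega⟩]
        ext x; simp; omega
      rwa [heq] at hm
  rcases eq_or_lt_of_le hbb with rfl | hlt
  · exact step1
  · have hm := aux8_shift_mem hsh (by omega : 1 ≤ b') hlt hbn step1
    have heq : shiftSet b' b {a', b} = {a', b'} := by
      rw [shiftSet, if_pos ⟨by simp, by simp; omega⟩]
      ext x; simp; omega
    rwa [heq] at hm

/-- The "cone" of pairs dominating `{i, M-i}` inside `[n]`. -/
def aux8cone (n M i : ℕ) : Finset (Finset ℕ) :=
  (Finset.Icc (M - i) n).biUnion fun b => (Finset.Ico i b).image fun a => {a, b}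

lemma aux8_mem_cone {n M i : ℕ} {A : Finset ℕ} :
    A ∈ aux8cone n M i ↔ ∃ a b : ℕ, i ≤ a ∧ a < b ∧ M - i ≤ b ∧ b ≤ n ∧ A = {a, b} := by
  simp only [aux8cone, Finset.mem_biUnion, Finset.mem_Icc, Finset.mem_image, Finset.mem_Ico]
  constructor
  · rintro ⟨b, ⟨hb1, hb2⟩, a, ⟨ha1, ha2⟩, rfl⟩
    exact ⟨a, b, ha1, ha2, hb1, hb2, rfl⟩
  · rintro ⟨a, b, h1, h2, h3, h4, rfl⟩
    exact ⟨b, ⟨h3, h4⟩, a, ⟨h1, h2⟩, rfl⟩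

lemma aux8_card_cone (n M i : ℕ) :
    (aux8cone n M i).card = ∑ b ∈ Finset.Icc (M - i) n, (b - i) := by
  rw [aux8cone, Finset.card_biUnion]
  · apply Finset.sum_congr rfl
    intro b _
    rw [Finset.card_image_of_injOn, Nat.card_Ico]
    intro x hx y hy hxy
    simp only [Finset.coe_Ico, Set.mem_Ico] at hx hy
    rcases aux8_pair_eq hxy with ⟨h1, _⟩ | ⟨h1, h2⟩ <;> omega
  · intro x _ y _ hxy
    rw [Function.onFun, Finset.disjoint_left]
    rintro A hA hA'
    simp only [Finset.mem_image, Finset.mem_Ico] at hA hA'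
    obtain ⟨a, ⟨ha1, ha2⟩, rfl⟩ := hA
    obtain ⟨a', ⟨hb1, hb2⟩, h⟩ := hA'
    rcases aux8_pair_eq h with ⟨h1, h2⟩ | ⟨h1, h2⟩ <;> omega

lemma aux8_two_mul_sum (i m n : ℕ) (him : i ≤ m) (hmn : m ≤ n + 1) :
    2 * ((∑ b ∈ Finset.Icc m n, (b - i) : ℕ) : ℤ) = ((m:ℤ) + n - 2*i) * ((n:ℤ) + 1 - m) := by
  rw [← Finset.Ico_add_one_right_eq_Icc, Finset.sum_Ico_eq_sum_range]
  have h1 : ∀ k ∈ Finset.range (n+1-m), m + k - i = (m - i) + k := by intro k _; omega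
  rw [Finset.sum_congr rfl h1, Finset.sum_add_distrib, Finset.sum_const, Finset.card_range,
    smul_eq_mul]
  have h2 := Finset.sum_range_id_mul_two (n+1-m)
  have hR : ((n+1-m : ℕ) : ℤ) = (n:ℤ)+1-m := by omega
  have hmi : ((m-i : ℕ) : ℤ) = (m:ℤ)-i := by omega
  have h3 : ((∑ k ∈ Finset.range (n+1-m), k : ℕ) : ℤ) * 2 = ((n:ℤ)+1-m) * ((n:ℤ)-m) := by
    have h4 := congrArg (Nat.cast : ℕ → ℤ) h2
    push_cast at h4 ⊢
    rw [h4, hR]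
    have h5 : ((n+1-m-1 : ℕ):ℤ) = (n:ℤ) - m ∨ ((n:ℤ)+1-m) = 0 := by omega
    rcases h5 with h | h
    · rw [h]
    · rw [h]; ring
  push_cast at h3 ⊢
  rw [hR, hmi]
  linear_combination h3

lemma aux8_pair_subset_Icc {a b m : ℕ} (hab : a < b) :
    ({a, b} : Finset ℕ) ⊆ Finset.Icc 1 m ↔ 1 ≤ a ∧ b ≤ m := by
  simp only [Finset.insert_subset_iff, Finset.singleton_subset_iff, Finset.mem_Icc]
  omega

end AuxStmt8

set_option maxHeartbeats 1600000 in
theorem stmt_8 (n s l c d : ℕ) (hs0 : 0 < s) (hl0 : 0 < l) (hc0 : 0 < c)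
    (hcl : c + l = s) (hn : n = 2 * l + 3 * c) (hd : Even d)
    (F : Finset (Finset ℕ)) (hF : ∀ A ∈ F, A ⊆ ground n) (hsh : IsShifted n F)
    (hdF : dF l F ≤ d) :
    min ((4 * (l : ℤ) + 3 * (c : ℤ) + (d : ℤ) - 2) * (3 * (c : ℤ) - (d : ℤ) + 1))
        (((l : ℤ) + 3 * (c : ℤ) - (d : ℤ) / 2 + 1) * ((l : ℤ) + 3 * (c : ℤ) - (d : ℤ) / 2))
      ≤ 2 * (yF n F 2 : ℤ) ∧
    (2 * (yF n F 2 : ℤ) =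
        min ((4 * (l : ℤ) + 3 * (c : ℤ) + (d : ℤ) - 2) * (3 * (c : ℤ) - (d : ℤ) + 1))
          (((l : ℤ) + 3 * (c : ℤ) - (d : ℤ) / 2 + 1) * ((l : ℤ) + 3 * (c : ℤ) - (d : ℤ) / 2)) →
      layer n F 2 = (Finset.Icc 1 (2 * l + d - 1)).powersetCard 2 ∨
      layer n F 2 = ((ground n).powersetCard 2).filter
        fun A => (A ∩ Finset.Icc 1 (l + d / 2 - 1)).Nonempty) := by
  obtain ⟨e, hde⟩ := hd
  have hdiv : (d:ℤ)/2 = (e:ℤ) := by omega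
  have hd2 : d / 2 = e := by omega
  classical
  -- basic set-up
  have hcardP2 : ((ground n).powersetCard 2).card = n.choose 2 := by
    rw [Finset.card_powersetCard]
    congr 1
    rw [ground, Nat.card_Icc]
    omega
  have hlayer : layer n F 2 = F ∩ (ground n).powersetCard 2 := rfl
  have hlsub : layer n F 2 ⊆ (ground n).powersetCard 2 := by
    rw [hlayer]; exact Finset.inter_subset_right
  have hycard : (layer n F 2).card ≤ n.choose 2 := hcardP2 ▸ Finset.card_le_card hlsub
  have hMisseq : (ground n).powersetCard 2 \ F = (ground n).powersetCard 2 \ layer n F 2 := by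
    ext A; simp only [Finset.mem_sdiff, hlayer, Finset.mem_inter]; tauto
  have hMisscard : ((ground n).powersetCard 2 \ F).card = yF n F 2 := by
    rw [hMisseq, Finset.card_sdiff_of_subset hlsub, yF, hcardP2]
  have hlayerc : layer n F 2 = (ground n).powersetCard 2 \ ((ground n).powersetCard 2 \ F) := by
    rw [hMisseq, sdiff_sdiff_right_self, Finset.inf_eq_inter,
      Finset.inter_eq_right.2 hlsub]
  rw [hdiv]
  by_cases hdc : d ≤ 3*c
  · -- main case
    -- the set defining `dF` is nonempty
    have hSne : {d' : ℕ | DCond l F d'}.Nonempty := by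
      refine ⟨2*n + 2*l + 2, Or.inl ⟨⟨n+l+1, by ring⟩, 1, ?_, ?_⟩⟩
      · rw [Finset.mem_Icc]; omega
      · intro hmem
        have hsub := hF _ hmem
        have hxin : 2*l + (2*n+2*l+2) + 1 - 1 ∈ ground n := hsub (by simp)
        rw [ground, Finset.mem_Icc] at hxin; omega
    -- extract a witness at level `d`
    have hwit : ∃ i, 1 ≤ i ∧ i ≤ l + e ∧ ({i, 2*l+d+1-i} : Finset ℕ) ∉ F := by
      have hd0mem : DCond l F (dF l F) := Nat.sInf_mem hSne
      have hd0le : dF l F ≤ d := hdF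
      set d0 := dF l F with hd0def
      rcases hd0mem with ⟨hev, i, hi, hnot⟩ | ⟨hodd, hcase⟩
      · obtain ⟨k, hk⟩ := hev
        rw [Finset.mem_Icc] at hi
        refine ⟨i, by omega, by omega, fun hmem => hnot ?_⟩
        exact aux8_pair_dom hsh (by omega) le_rfl (by omega) (by omega) (by omega)
          (by omega) hmem
      · obtain ⟨k, hk⟩ := hodd
        rcases hcase with hnot | ⟨i, hi, hnot⟩
        · refine ⟨1, le_rfl, by omega, fun hmem => hnot ?_⟩
          exact aux8_pair_dom hsh le_rfl le_rfl (by omega) (by omega) (by omega)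
            (by omega) hmem
        · rw [Finset.mem_Icc] at hi
          refine ⟨i, by omega, by omega, fun hmem => hnot ?_⟩
          exact aux8_pair_dom hsh (by omega) le_rfl (by omega) (by omega) (by omega)
            (by omega) hmem
    obtain ⟨i, hi1, hiL, hinot⟩ := hwit
    -- the cone over the missing pair is disjoint from `F`
    have hconesub : aux8cone n (2*l+d+1) i ⊆ (ground n).powersetCard 2 \ F := by
      intro A hA
      rw [aux8_mem_cone] at hA
      obtain ⟨a, b, h1, h2, h3, h4, rfl⟩ := hA
      rw [Finset.mem_sdiff, Finset.mem_powersetCard]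
      have hane : a ∉ ({b} : Finset ℕ) := by simp; omega
      refine ⟨⟨?_, ?_⟩, ?_⟩
      · rw [ground, aux8_pair_subset_Icc h2]; omega
      · rw [Finset.card_insert_of_notMem hane, Finset.card_singleton]
      · intro hmem
        exact hinot (aux8_pair_dom hsh hi1 h1 h3 (by omega) h2 h4 hmem)
    have hcle : (aux8cone n (2*l+d+1) i).card ≤ ((ground n).powersetCard 2 \ F).card :=
      Finset.card_le_card hconesub
    -- compute twice the cardinality of the cone
    have hMi : i ≤ 2*l+d+1 - i := by omega
    have hMn : 2*l+d+1 - i ≤ n + 1 := by omega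
    have hsum := aux8_two_mul_sum i (2*l+d+1 - i) n hMi hMn
    have hcast : (((2*l+d+1 - i : ℕ)) : ℤ) = 2*(l:ℤ) + d + 1 - i := by omega
    have hnz : (n:ℤ) = 2*(l:ℤ) + 3*c := by omega
    have hfi : 2 * ((aux8cone n (2*l+d+1) i).card : ℤ)
        = (4*(l:ℤ) + 3*c + d + 1 - 3*i) * (3*(c:ℤ) - d + i) := by
      rw [aux8_card_cone, hsum, hcast, hnz]; ring
    set f1 : ℤ := (4 * (l : ℤ) + 3 * (c : ℤ) + (d : ℤ) - 2) * (3 * (c : ℤ) - (d : ℤ) + 1)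
      with hf1
    set fL : ℤ := ((l : ℤ) + 3 * (c : ℤ) - (e : ℤ) + 1) * ((l : ℤ) + 3 * (c : ℤ) - (e : ℤ))
      with hfL
    have hde2 : (d:ℤ) = 2*e := by omega
    have hile : (i:ℤ) ≤ (l:ℤ) + e := by omega
    have hige : (1:ℤ) ≤ (i:ℤ) := by omega
    have hid : ((l:ℤ) + e - 1) * ((4*(l:ℤ)+3*c+d+1-3*i)*(3*(c:ℤ)-d+i))
        = ((l:ℤ)+e-i)*f1 + ((i:ℤ)-1)*fL + 3*((i:ℤ)-1)*((l:ℤ)+e-i)*((l:ℤ)+e-1) := by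
      rw [hf1, hfL, hde2]; ring
    have hmin_le : min f1 fL ≤ (4*(l:ℤ)+3*c+d+1-3*i)*(3*(c:ℤ)-d+i) := by
      rcases eq_or_lt_of_le hige with heq1 | hgt1
      · rw [show (4*(l:ℤ)+3*c+d+1-3*i)*(3*(c:ℤ)-d+i) = f1 from by
          rw [hf1, ← heq1]; ring]
        exact min_le_left _ _
      · rcases eq_or_lt_of_le hile with heqL | hltL
        · rw [show (4*(l:ℤ)+3*c+d+1-3*i)*(3*(c:ℤ)-d+i) = fL from by
            rw [hfL, heqL, hde2]; ring]
          exact min_le_right _ _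
        · have hm1 : min f1 fL ≤ f1 := min_le_left _ _
          have hm2 : min f1 fL ≤ fL := min_le_right _ _
          have t1 := mul_nonneg (by linarith : (0:ℤ) ≤ (l:ℤ)+e-i) (sub_nonneg.2 hm1)
          have t2 := mul_nonneg (by linarith : (0:ℤ) ≤ (i:ℤ)-1) (sub_nonneg.2 hm2)
          have t3 := mul_nonneg (mul_nonneg (by linarith : (0:ℤ) ≤ 3*((i:ℤ)-1))
            (by linarith : (0:ℤ) ≤ (l:ℤ)+e-i)) (by linarith : (0:ℤ) ≤ (l:ℤ)+e-1)
          have hprod : ((l:ℤ)+e-1) * ((4*(l:ℤ)+3*c+d+1-3*i)*(3*(c:ℤ)-d+i) - min f1 fL)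
              = ((l:ℤ)+e-i)*(f1 - min f1 fL) + ((i:ℤ)-1)*(fL - min f1 fL)
                + 3*((i:ℤ)-1)*((l:ℤ)+e-i)*((l:ℤ)+e-1) := by
            linear_combination hid
          have hpos : (0:ℤ) < (l:ℤ)+e-1 := by linarith
          have hnn : (0:ℤ) ≤ ((l:ℤ)+e-1) *
              ((4*(l:ℤ)+3*c+d+1-3*i)*(3*(c:ℤ)-d+i) - min f1 fL) := by
            rw [hprod]; linarith
          have := (mul_nonneg_iff_of_pos_left hpos).mp hnn
          linarith
    have hykey : (4*(l:ℤ)+3*c+d+1-3*i)*(3*(c:ℤ)-d+i) ≤ 2 * (yF n F 2 : ℤ) := by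
      rw [← hfi]; omega
    constructor
    · exact le_trans hmin_le hykey
    · intro heq
      have hfieq : (4*(l:ℤ)+3*c+d+1-3*i)*(3*(c:ℤ)-d+i) = min f1 fL := by
        rw [heq] at hykey
        exact le_antisymm hykey hmin_le
      have h2c : 2 * ((aux8cone n (2*l+d+1) i).card:ℤ)
          = 2 * ((((ground n).powersetCard 2 \ F)).card:ℤ) := by
        rw [hfi, hfieq, ← heq, hMisscard]
      have hcardeq : ((ground n).powersetCard 2 \ F).card ≤ (aux8cone n (2*l+d+1) i).card := by
        omega
      have hconeeq : aux8cone n (2*l+d+1) i = (ground n).powersetCard 2 \ F :=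
        Finset.eq_of_subset_of_card_le hconesub hcardeq
      have hend : i = 1 ∨ i = l + e := by
        by_contra hcon
        push_neg at hcon
        have h2i : (2:ℤ) ≤ (i:ℤ) := by omega
        have hiltL : (i:ℤ) + 1 ≤ (l:ℤ) + e := by omega
        have hm1 : min f1 fL ≤ f1 := min_le_left _ _
        have hm2 : min f1 fL ≤ fL := min_le_right _ _
        rw [hfieq] at hid
        have t1 := mul_nonneg (by linarith : (0:ℤ) ≤ (l:ℤ)+e-i) (sub_nonneg.2 hm1)
        have t2 := mul_nonneg (by linarith : (0:ℤ) ≤ (i:ℤ)-1) (sub_nonneg.2 hm2)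
        have u1 : (1:ℤ)*1 ≤ ((i:ℤ)-1)*((l:ℤ)+e-i) :=
          mul_le_mul (by linarith) (by linarith) (by norm_num) (by linarith)
        have u2 : (((i:ℤ)-1)*((l:ℤ)+e-i))*1 ≤ (((i:ℤ)-1)*((l:ℤ)+e-i))*((l:ℤ)+e-1) :=
          mul_le_mul (le_refl _) (by linarith) (by norm_num) (by linarith)
        have t3 : (1:ℤ) ≤ ((i:ℤ)-1)*((l:ℤ)+e-i)*((l:ℤ)+e-1) := by
          calc (1:ℤ) = 1*1 := by norm_num
          _ ≤ ((i:ℤ)-1)*((l:ℤ)+e-i) := u1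
          _ = (((i:ℤ)-1)*((l:ℤ)+e-i))*1 := by ring
          _ ≤ ((i:ℤ)-1)*((l:ℤ)+e-i)*((l:ℤ)+e-1) := u2
        -- hid : (L-1) * m = (L-i)*f1 + (i-1)*fL + 3*(i-1)*(L-i)*(L-1)
        have hcontr : (0:ℤ) = ((l:ℤ)+e-i)*(f1 - min f1 fL) + ((i:ℤ)-1)*(fL - min f1 fL)
            + 3*((i:ℤ)-1)*((l:ℤ)+e-i)*((l:ℤ)+e-1) := by
          linear_combination hid
        linarith
      rcases hend with rfl | rfl
      · left
        rw [hlayerc, ← hconeeq]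
        ext A
        simp only [Finset.mem_sdiff, Finset.mem_powersetCard, aux8_mem_cone, ground]
        constructor
        · rintro ⟨⟨hsub, hcard⟩, hnotc⟩
          obtain ⟨a, b, hab, rfl⟩ := aux8_exists_lt_pair hcard
          rw [aux8_pair_subset_Icc hab] at hsub
          refine ⟨?_, hcard⟩
          rw [aux8_pair_subset_Icc hab]
          refine ⟨hsub.1, ?_⟩
          by_contra hcon2
          exact hnotc ⟨a, b, by omega, hab, by omega, by omega, rfl⟩
        · rintro ⟨hsub, hcard⟩
          obtain ⟨a, b, hab, rfl⟩ := aux8_exists_lt_pair hcard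
          rw [aux8_pair_subset_Icc hab] at hsub
          refine ⟨⟨?_, hcard⟩, ?_⟩
          · rw [aux8_pair_subset_Icc hab]; omega
          · rintro ⟨a', b', h1, h2, h3, h4, hEq⟩
            rcases aux8_pair_eq hEq with ⟨rfl, rfl⟩ | ⟨rfl, rfl⟩ <;> omega
      · right
        rw [hlayerc, ← hconeeq]
        ext A
        simp only [Finset.mem_sdiff, Finset.mem_filter, aux8_mem_cone, hd2]
        constructor
        · rintro ⟨hA2, hnotc⟩
          refine ⟨hA2, ?_⟩
          rw [Finset.mem_powersetCard] at hA2
          obtain ⟨hsub, hcard⟩ := hA2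
          obtain ⟨a, b, hab, rfl⟩ := aux8_exists_lt_pair hcard
          rw [ground, aux8_pair_subset_Icc hab] at hsub
          have ha' : a < l + e := by
            by_contra hcon2
            exact hnotc ⟨a, b, by omega, hab, by omega, hsub.2, rfl⟩
          refine ⟨a, ?_⟩
          rw [Finset.mem_inter, Finset.mem_Icc]
          exact ⟨by simp, by omega⟩
        · rintro ⟨hA2, x, hx⟩
          refine ⟨hA2, ?_⟩
          rw [Finset.mem_inter, Finset.mem_Icc] at hx
          rintro ⟨a', b', h1, h2, h3, h4, hEq⟩
          have hxin : x ∈ ({a', b'} : Finset ℕ) := hEq ▸ hx.1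
          simp only [Finset.mem_insert, Finset.mem_singleton] at hxin
          omega
  · -- degenerate case d > 3c
    push_neg at hdc
    have hb1 : (4 * (l : ℤ) + 3 * c + d - 2) * (3 * c - d + 1) ≤ 0 := by
      apply mul_nonpos_of_nonneg_of_nonpos <;> [skip; skip] <;> push_cast <;> omega
    have hyge : (0:ℤ) ≤ 2 * (yF n F 2 : ℤ) := by positivity
    constructor
    · exact le_trans (min_le_left _ _) (le_trans hb1 hyge)
    · intro heq
      have hmin := min_le_left ((4 * (l : ℤ) + 3 * c + d - 2) * (3 * c - d + 1))
        (((l : ℤ) + 3 * c - e + 1) * ((l : ℤ) + 3 * c - e))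
      have hzero : (4 * (l : ℤ) + 3 * c + d - 2) * (3 * c - d + 1) = 0 := by
        nlinarith [hyge, heq, hmin, hb1]
      have hd31 : d = 3*c + 1 := by
        rcases mul_eq_zero.1 hzero with h | h <;> omega
      have hy0 : yF n F 2 = 0 := by
        have : 2 * (yF n F 2 : ℤ) = 0 := le_antisymm (by omega) hyge
        omega
      left
      have hcard : (layer n F 2).card = n.choose 2 := by
        rw [yF] at hy0; omega
      have : layer n F 2 = (ground n).powersetCard 2 :=
        Finset.eq_of_subset_of_card_le hlsub (by rw [hcardP2, hcard])
      rw [this, ground, show 2*l + d - 1 = n by omega]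
end

section
/- Let s,ℓ,c be positive integers with c+ℓ=s and n=3s-ℓ=2ℓ+3c, and let d be a positive odd integer with d ≤ 2c. If F ⊆ 2^[n] is a shifted family with d(F) = d, then y_F(2) ≥ min{(4ℓ+3c+d−2)(3c−d+1)/2, (ℓ+3c−(d−1)/2)(ℓ+3c−(d+1)/2)/2}. Moreover, equality is achieved only if F^{(2)} = ([2ℓ+d−1] choose 2) or F^{(2)} = {F ∈ ([n] choose 2) : F ∩ [ℓ+(d−1)/2] ≠ ∅}. -/
open Finset

section Aux
open Finset

lemma shiftSet_mem_of_isShifted {n : ℕ} {F : Finset (Finset ℕ)} (hsh : IsShifted n F)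
    {i j : ℕ} (h1 : 1 ≤ i) (h2 : i < j) (h3 : j ≤ n) {A : Finset ℕ} (hA : A ∈ F) :
    shiftSet i j A ∈ F := by
  have h := hsh i j h1 h2 h3
  rw [← h]
  exact Finset.mem_union_left _ (Finset.mem_image_of_mem _ hA)

lemma pair_shift {n : ℕ} {F : Finset (Finset ℕ)} (hsh : IsShifted n F)
    {p q a b : ℕ} (hp : 1 ≤ p) (hpq : p < q) (hpa : p ≤ a) (hqb : q ≤ b)
    (hab : a < b) (hbn : b ≤ n) (hmem : ({a, b} : Finset ℕ) ∈ F) :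
    ({p, q} : Finset ℕ) ∈ F := by
  have hpb : p < b := lt_of_le_of_lt hpa hab
  have hstep1 : ({p, b} : Finset ℕ) ∈ F := by
    rcases eq_or_lt_of_le hpa with rfl | hlt
    · exact hmem
    · have hmem2 := shiftSet_mem_of_isShifted hsh hp hlt (le_trans (le_of_lt hab) hbn) hmem
      have hcond : a ∈ ({a, b} : Finset ℕ) ∧ p ∉ ({a, b} : Finset ℕ) := by
        constructor
        · exact Finset.mem_insert_self a {b}
        · simp only [Finset.mem_insert, Finset.mem_singleton]
          push_neg
          omega
      have heq : shiftSet p a ({a, b} : Finset ℕ) = ({p, b} : Finset ℕ) := by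
        rw [shiftSet, if_pos hcond, Finset.erase_insert (by simp; omega)]
      rwa [heq] at hmem2
  rcases eq_or_lt_of_le hqb with rfl | hlt
  · exact hstep1
  · have hq1 : 1 ≤ q := le_trans hp (le_of_lt hpq)
    have hmem2 := shiftSet_mem_of_isShifted hsh hq1 hlt hbn hstep1
    have hcond : b ∈ ({p, b} : Finset ℕ) ∧ q ∉ ({p, b} : Finset ℕ) := by
      constructor
      · simp
      · simp only [Finset.mem_insert, Finset.mem_singleton]
        push_neg
        omega
    have heq : shiftSet q b ({p, b} : Finset ℕ) = ({p, q} : Finset ℕ) := by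
      rw [shiftSet, if_pos hcond, Finset.erase_insert_of_ne (by omega),
        Finset.erase_singleton]
      rw [Finset.pair_comm]
      rfl
    rwa [heq] at hmem2

lemma rect_sub {n : ℕ} {F : Finset (Finset ℕ)} (hsh : IsShifted n F)
    {p q : ℕ} (hp : 1 ≤ p) (hpq : p < q)
    (hmiss : ({p, q} : Finset ℕ) ∉ F) :
    (Icc p n).powersetCard 2 \ (Icc p (q - 1)).powersetCard 2
      ⊆ (ground n).powersetCard 2 \ layer n F 2 := by
  intro A hA
  rw [Finset.mem_sdiff, Finset.mem_powersetCard] at hA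
  obtain ⟨⟨hsub, hcard⟩, hnot⟩ := hA
  obtain ⟨a, b, hne, rfl⟩ := Finset.card_eq_two.mp hcard
  have hmemP2 : ({a, b} : Finset ℕ) ∈ (ground n).powersetCard 2 := by
    rw [Finset.mem_powersetCard]
    refine ⟨?_, hcard⟩
    intro x hx
    have hx2 := hsub hx
    rw [Finset.mem_Icc] at hx2
    rw [ground, Finset.mem_Icc]
    omega
  rw [Finset.mem_sdiff]
  refine ⟨hmemP2, ?_⟩
  rw [layer, Finset.mem_inter]
  rintro ⟨hmemF, -⟩
  have ha := hsub (by simp : a ∈ ({a, b} : Finset ℕ))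
  have hb := hsub (by simp : b ∈ ({a, b} : Finset ℕ))
  rw [Finset.mem_Icc] at ha hb
  have hmax : q ≤ a ∨ q ≤ b := by
    by_contra hcon
    push_neg at hcon
    exact hnot (by
      rw [Finset.mem_powersetCard]
      refine ⟨?_, hcard⟩
      intro x hx
      simp only [Finset.mem_insert, Finset.mem_singleton] at hx
      rw [Finset.mem_Icc]
      rcases hx with rfl | rfl <;> omega)
  rcases Nat.lt_or_ge a b with hab | hab
  · have hqb : q ≤ b := by omega
    exact hmiss (pair_shift hsh hp hpq ha.1 hqb hab hb.2 hmemF)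
  · have hba : b < a := by omega
    have hqa : q ≤ a := by omega
    rw [Finset.pair_comm] at hmemF
    exact hmiss (pair_shift hsh hp hpq hb.1 hqa hba ha.2 hmemF)

lemma two_mul_choose_two (m : ℕ) : (2 * m.choose 2 : ℤ) = (m : ℤ) * ((m : ℤ) - 1) := by
  rcases m with _ | mm
  · simp
  · have h2 : 2 ∣ (mm + 1) * mm := by
      rw [mul_comm]
      exact (Nat.even_mul_succ_self mm).two_dvd
    have key : 2 * ((mm + 1).choose 2) = (mm + 1) * mm := by
      rw [Nat.choose_two_right]
      simp only [Nat.add_sub_cancel]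
      exact Nat.mul_div_cancel' h2
    have key2 := congrArg (Nat.cast : ℕ → ℤ) key
    push_cast at key2 ⊢
    linarith

lemma two_mul_cardR (n p q : ℕ) (hp : 1 ≤ p) (hpq : p < q) (hqn : q ≤ n) :
    (2 * ((Icc p n).powersetCard 2 \ (Icc p (q - 1)).powersetCard 2).card : ℤ)
      = ((n : ℤ) + 1 - p) * ((n : ℤ) - p) - ((q : ℤ) - p) * ((q : ℤ) - p - 1) := by
  have hsub : (Icc p (q - 1)).powersetCard 2 ⊆ (Icc p n).powersetCard 2 :=
    Finset.powersetCard_mono (Finset.Icc_subset_Icc_right (by omega))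
  rw [Finset.card_sdiff_of_subset hsub, Finset.card_powersetCard, Finset.card_powersetCard,
    Nat.card_Icc, Nat.card_Icc]
  have h1 : q - 1 + 1 - p = q - p := by omega
  rw [h1]
  have hm : (q - p).choose 2 ≤ (n + 1 - p).choose 2 := Nat.choose_le_choose 2 (by omega)
  rw [Nat.cast_sub hm, mul_sub, two_mul_choose_two, two_mul_choose_two]
  have e1 : ((n + 1 - p : ℕ) : ℤ) = (n : ℤ) + 1 - p := by omega
  have e2 : ((q - p : ℕ) : ℤ) = (q : ℤ) - p := by omega
  rw [e1, e2]
  ring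

lemma arithB (L C K i : ℤ) (hL : 1 ≤ L) (hC : 1 ≤ C) (hK : 0 ≤ K) (hKC : K + 1 ≤ C)
    (hi3 : 3 ≤ i) (hiI : i ≤ L + K + 1) :
    min ((4*L+3*C+(2*K+1)-2)*(3*C-(2*K+1)+1)) ((L+3*C-K)*(L+3*C-(K+1)))
      ≤ (2*L+3*C+1-i)*(2*L+3*C-i) - (2*L+2*K+3-2*i)*(2*L+2*K+3-2*i-1) := by
  rcases le_total ((4*L+3*C+(2*K+1)-2)*(3*C-(2*K+1)+1)) ((L+3*C-K)*(L+3*C-(K+1))) with h | h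
  · rw [min_eq_left h]
    nlinarith [sq_nonneg (i - 3), sq_nonneg (L + K + 1 - i),
      mul_nonneg (sub_nonneg.2 hi3) (sub_nonneg.2 hiI), sq_nonneg (C - K - 1),
      mul_nonneg (sub_nonneg.2 hi3) (sub_nonneg.2 hKC)]
  · rw [min_eq_right h]
    nlinarith [sq_nonneg (i - 3), sq_nonneg (L + K + 1 - i),
      mul_nonneg (sub_nonneg.2 hi3) (sub_nonneg.2 hiI), sq_nonneg (C - K - 1),
      mul_nonneg (sub_nonneg.2 hi3) (sub_nonneg.2 hKC)]

lemma arithBstrict (L C K i : ℤ) (hL : 1 ≤ L) (hC : 1 ≤ C) (hK : 0 ≤ K) (hKC : K + 1 ≤ C)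
    (hi3 : 3 ≤ i) (hiI : i ≤ L + K) :
    min ((4*L+3*C+(2*K+1)-2)*(3*C-(2*K+1)+1)) ((L+3*C-K)*(L+3*C-(K+1)))
      < (2*L+3*C+1-i)*(2*L+3*C-i) - (2*L+2*K+3-2*i)*(2*L+2*K+3-2*i-1) := by
  rcases le_total ((4*L+3*C+(2*K+1)-2)*(3*C-(2*K+1)+1)) ((L+3*C-K)*(L+3*C-(K+1))) with h | h
  · rw [min_eq_left h]
    nlinarith [sq_nonneg (i - 3), sq_nonneg (L + K - i),
      mul_nonneg (sub_nonneg.2 hi3) (sub_nonneg.2 hiI), sq_nonneg (C - K - 1),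
      mul_nonneg (sub_nonneg.2 hi3) (sub_nonneg.2 hKC)]
  · rw [min_eq_right h]
    nlinarith [sq_nonneg (i - 3), sq_nonneg (L + K - i),
      mul_nonneg (sub_nonneg.2 hi3) (sub_nonneg.2 hiI), sq_nonneg (C - K - 1),
      mul_nonneg (sub_nonneg.2 hi3) (sub_nonneg.2 hKC)]

lemma main_step {n : ℕ} {F : Finset (Finset ℕ)} (hsh : IsShifted n F)
    {p q : ℕ} (hp : 1 ≤ p) (hpq : p < q) (hqn : q ≤ n)
    (hmiss : ({p, q} : Finset ℕ) ∉ F) :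
    ((n : ℤ) + 1 - p) * ((n : ℤ) - p) - ((q : ℤ) - p) * ((q : ℤ) - p - 1)
        ≤ 2 * (yF n F 2 : ℤ) ∧
    (2 * (yF n F 2 : ℤ)
        = ((n : ℤ) + 1 - p) * ((n : ℤ) - p) - ((q : ℤ) - p) * ((q : ℤ) - p - 1) →
      layer n F 2 = (ground n).powersetCard 2 \
        ((Icc p n).powersetCard 2 \ (Icc p (q - 1)).powersetCard 2)) := by
  have hlayer_sub : layer n F 2 ⊆ (ground n).powersetCard 2 := Finset.inter_subset_right
  have hcardP2 : ((ground n).powersetCard 2).card = n.choose 2 := by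
    rw [Finset.card_powersetCard, ground, Nat.card_Icc]
    simp
  have hyF : yF n F 2 = ((ground n).powersetCard 2 \ layer n F 2).card := by
    rw [yF, Finset.card_sdiff_of_subset hlayer_sub, hcardP2]
  have hRsub := rect_sub hsh hp hpq hmiss
  have hcardle : ((Icc p n).powersetCard 2 \ (Icc p (q - 1)).powersetCard 2).card
      ≤ ((ground n).powersetCard 2 \ layer n F 2).card := Finset.card_le_card hRsub
  have h2R := two_mul_cardR n p q hp hpq hqn
  constructor
  · rw [hyF]
    rw [← h2R]
    exact_mod_cast Nat.mul_le_mul_left 2 hcardle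
  · intro heq
    have hcardeq : ((ground n).powersetCard 2 \ layer n F 2).card
        ≤ ((Icc p n).powersetCard 2 \ (Icc p (q - 1)).powersetCard 2).card := by
      rw [hyF, ← h2R] at heq
      omega
    have hReq : (Icc p n).powersetCard 2 \ (Icc p (q - 1)).powersetCard 2
        = (ground n).powersetCard 2 \ layer n F 2 :=
      Finset.eq_of_subset_of_card_le hRsub hcardeq
    rw [hReq]
    exact (Finset.sdiff_sdiff_eq_self hlayer_sub).symm

end Aux

theorem stmt_9 (n s l c d : ℕ) (hs0 : 0 < s) (hl0 : 0 < l) (hc0 : 0 < c)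
    (hcl : c + l = s) (hn : n = 2 * l + 3 * c) (hd : Odd d) (hd0 : 0 < d)
    (hd2c : d ≤ 2 * c)
    (F : Finset (Finset ℕ)) (hF : ∀ A ∈ F, A ⊆ ground n) (hsh : IsShifted n F)
    (hdF : dF l F = d) :
    min ((4 * (l : ℤ) + 3 * (c : ℤ) + (d : ℤ) - 2) * (3 * (c : ℤ) - (d : ℤ) + 1))
        (((l : ℤ) + 3 * (c : ℤ) - ((d : ℤ) - 1) / 2) * ((l : ℤ) + 3 * (c : ℤ) - ((d : ℤ) + 1) / 2))
      ≤ 2 * (yF n F 2 : ℤ) ∧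
    (2 * (yF n F 2 : ℤ) =
        min ((4 * (l : ℤ) + 3 * (c : ℤ) + (d : ℤ) - 2) * (3 * (c : ℤ) - (d : ℤ) + 1))
          (((l : ℤ) + 3 * (c : ℤ) - ((d : ℤ) - 1) / 2) * ((l : ℤ) + 3 * (c : ℤ) - ((d : ℤ) + 1) / 2)) →
      layer n F 2 = (Finset.Icc 1 (2 * l + d - 1)).powersetCard 2 ∨
      layer n F 2 = ((ground n).powersetCard 2).filter
        fun A => (A ∩ Finset.Icc 1 (l + (d - 1) / 2)).Nonempty) := by
  obtain ⟨k, hk⟩ := hd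
  have hkc : k + 1 ≤ c := by omega
  have hne : {d' : ℕ | DCond l F d'}.Nonempty := by
    by_contra h
    rw [Set.not_nonempty_iff_eq_empty] at h
    have h0 : dF l F = 0 := by rw [dF, h, Nat.sInf_empty]
    omega
  have hDC : DCond l F d := by
    have h : dF l F ∈ {d' : ℕ | DCond l F d'} := Nat.sInf_mem hne
    rw [hdF] at h
    exact h
  have hdZ : (d : ℤ) = 2 * (k : ℤ) + 1 := by omega
  have hdiv1 : ((d : ℤ) - 1) / 2 = (k : ℤ) := by omega
  have hdiv2 : ((d : ℤ) + 1) / 2 = (k : ℤ) + 1 := by omega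
  have hnZ : (n : ℤ) = 2 * (l : ℤ) + 3 * (c : ℤ) := by omega
  rw [hdiv1, hdiv2, hdZ]
  rcases hDC with ⟨hev, -⟩ | ⟨-, hodd⟩
  · exfalso
    rw [Nat.even_iff] at hev
    omega
  rcases hodd with hmissA | ⟨i0, hi0mem, hmissB⟩
  · -- Case A : {1, 2l+d} ∉ F
    have hms := main_step hsh (p := 1) (q := 2 * l + d) (le_refl 1) (by omega) (by omega) hmissA
    have h := hms.1
    push_cast at h
    rw [hnZ, hdZ] at h
    have hml := min_le_left
      ((4 * (l : ℤ) + 3 * (c : ℤ) + (2 * (k : ℤ) + 1) - 2) * (3 * (c : ℤ) - (2 * (k : ℤ) + 1) + 1))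
      (((l : ℤ) + 3 * (c : ℤ) - (k : ℤ)) * ((l : ℤ) + 3 * (c : ℤ) - ((k : ℤ) + 1)))
    constructor
    · linarith [h, hml]
    · intro heq
      left
      have hlay := hms.2 (by
        push_cast
        rw [hnZ, hdZ]
        linarith [h, hml, heq])
      rw [hlay]
      have hsubS : (Icc 1 (2 * l + d - 1)).powersetCard 2 ⊆ (Icc 1 n).powersetCard 2 :=
        Finset.powersetCard_mono (Finset.Icc_subset_Icc_right (by omega))
      rw [show ground n = Icc 1 n from rfl]
      exact Finset.sdiff_sdiff_eq_self hsubS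
  · -- Case B
    rw [Finset.mem_Icc] at hi0mem
    have hi03 : 3 ≤ i0 := hi0mem.1
    have hi0u : i0 ≤ l + k + 1 := by
      have hdd : (d + 1) / 2 = k + 1 := by omega
      omega
    set q := 2 * l + d + 2 - i0 with hqdef
    have hpq : i0 < q := by omega
    have hqn : q ≤ n := by omega
    have hcq : (q : ℤ) = 2 * (l : ℤ) + 2 * (k : ℤ) + 3 - (i0 : ℤ) := by omega
    have hms := main_step hsh (p := i0) (q := q) (by omega) hpq hqn hmissB
    have h := hms.1
    push_cast at h
    rw [hcq, hnZ] at h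
    have hB := arithB (l : ℤ) (c : ℤ) (k : ℤ) (i0 : ℤ) (by omega) (by omega) (by omega)
      (by omega) (by omega) (by omega)
    constructor
    · linarith [h, hB]
    · intro heq
      right
      by_cases hle : i0 ≤ l + k
      · exfalso
        have hBs := arithBstrict (l : ℤ) (c : ℤ) (k : ℤ) (i0 : ℤ) (by omega) (by omega)
          (by omega) (by omega) (by omega) (by omega)
        linarith [h, hBs, heq]
      · have hi0e : i0 = l + k + 1 := by omega
        have hlay := hms.2 (by
          push_cast
          rw [hcq, hnZ]
          linarith [h, hB, heq])
        have hqi : q - 1 = i0 := by omega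
        rw [hqi] at hlay
        have hempty : (Icc i0 i0).powersetCard 2 = ∅ := by
          apply Finset.powersetCard_eq_empty.2
          simp
        rw [hempty, Finset.sdiff_empty] at hlay
        rw [hlay]
        have hlk : l + (d - 1) / 2 = l + k := by omega
        rw [hlk, hi0e]
        ext A
        simp only [Finset.mem_sdiff, Finset.mem_powersetCard, Finset.mem_filter, ground]
        constructor
        · rintro ⟨⟨h1, h2c⟩, h3⟩
          refine ⟨⟨h1, h2c⟩, ?_⟩
          have hns : ¬ A ⊆ Icc (l + k + 1) n := fun hs => h3 ⟨hs, h2c⟩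
          rw [Finset.not_subset] at hns
          obtain ⟨x, hxA, hxn⟩ := hns
          have hx1 := h1 hxA
          rw [Finset.mem_Icc] at hx1
          rw [Finset.mem_Icc] at hxn
          exact ⟨x, Finset.mem_inter.2 ⟨hxA, Finset.mem_Icc.2 (by omega)⟩⟩
        · rintro ⟨⟨h1, h2c⟩, hne2⟩
          refine ⟨⟨h1, h2c⟩, ?_⟩
          rintro ⟨hs, -⟩
          obtain ⟨x, hx⟩ := hne2
          rw [Finset.mem_inter, Finset.mem_Icc] at hx
          have hx2 := hs hx.1
          rw [Finset.mem_Icc] at hx2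
          omega
end

section
/- Let s,ℓ,c be positive integers with c+ℓ=s and n=3s-ℓ=2ℓ+3c, and let F ⊆ 2^[n] be a shifted family. If d(F) > 0 and ν(F) < s, then y_F(3) ≥ C(3c−1, 2). Moreover, equality is achieved only if F contains all sets in ([n] choose 3) \ ([2ℓ+1,n] choose 3). -/
open Finset

/-- Partitions of `V` into triples. -/
def triPart (V : Finset ℕ) : Finset (Finset (Finset ℕ)) :=
  (V.powersetCard 3).powerset.filter fun M =>
    M.biUnion id = V ∧ ∀ T₁ ∈ M, ∀ T₂ ∈ M, T₁ ≠ T₂ → Disjoint T₁ T₂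

def pfun : ℕ → ℕ
  | 0 => 1
  | c + 1 => Nat.choose (3 * c + 2) 2 * pfun c

lemma mem_triPart {V : Finset ℕ} {M : Finset (Finset ℕ)} :
    M ∈ triPart V ↔ (∀ T ∈ M, T ⊆ V ∧ T.card = 3) ∧ M.biUnion id = V ∧
      ∀ T₁ ∈ M, ∀ T₂ ∈ M, T₁ ≠ T₂ → Disjoint T₁ T₂ := by
  simp only [triPart, mem_filter, mem_powerset, and_assoc]
  constructor
  · rintro ⟨h1, h2, h3⟩
    exact ⟨fun T hT => by simpa [Finset.mem_powersetCard] using h1 hT, h2, h3⟩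
  · rintro ⟨h1, h2, h3⟩
    exact ⟨fun T hT => by simpa [Finset.mem_powersetCard] using h1 T hT, h2, h3⟩

lemma pfun_pos (c : ℕ) : 0 < pfun c := by
  induction c with
  | zero => simp [pfun]
  | succ c ih => exact Nat.mul_pos (Nat.choose_pos (by omega)) ih

lemma erase_mem_triPart {V : Finset ℕ} {M : Finset (Finset ℕ)} {T : Finset ℕ}
    (hM : M ∈ triPart V) (hT : T ∈ M) : M.erase T ∈ triPart (V \ T) := by
  rw [mem_triPart] at hM ⊢
  obtain ⟨h1, h2, h3⟩ := hM
  refine ⟨?_, ?_, ?_⟩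
  · intro T' hT'
    have hT'M := Finset.mem_of_mem_erase hT'
    have hne := Finset.ne_of_mem_erase hT'
    refine ⟨?_, (h1 T' hT'M).2⟩
    intro x hx
    rw [Finset.mem_sdiff]
    exact ⟨(h1 T' hT'M).1 hx, fun hxT =>
      (Finset.disjoint_left.mp (h3 T' hT'M T hT hne) hx) hxT⟩
  · apply Finset.Subset.antisymm
    · intro x hx
      rw [Finset.mem_biUnion] at hx
      obtain ⟨T', hT', hx⟩ := hx
      have hT'M := Finset.mem_of_mem_erase hT'
      have hne := Finset.ne_of_mem_erase hT'
      rw [Finset.mem_sdiff]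
      exact ⟨(h1 T' hT'M).1 hx, fun hxT =>
        (Finset.disjoint_left.mp (h3 T' hT'M T hT hne) hx) hxT⟩
    · intro x hx
      rw [Finset.mem_sdiff] at hx
      have : x ∈ M.biUnion id := h2 ▸ hx.1
      rw [Finset.mem_biUnion] at this
      obtain ⟨T', hT', hx'⟩ := this
      rw [Finset.mem_biUnion]
      refine ⟨T', Finset.mem_erase.mpr ⟨?_, hT'⟩, hx'⟩
      rintro rfl; exact hx.2 hx'
  · intro T₁ h₁ T₂ h₂ hne
    exact h3 T₁ (Finset.mem_of_mem_erase h₁) T₂ (Finset.mem_of_mem_erase h₂) hne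

lemma insert_mem_triPart {V T : Finset ℕ} {N : Finset (Finset ℕ)}
    (hTV : T ⊆ V) (hTc : T.card = 3) (hN : N ∈ triPart (V \ T)) :
    insert T N ∈ triPart V := by
  rw [mem_triPart] at hN ⊢
  obtain ⟨h1, h2, h3⟩ := hN
  have hdisj : ∀ T' ∈ N, Disjoint T' T := by
    intro T' hT'
    have := (h1 T' hT').1
    exact Finset.disjoint_left.mpr fun x hx => (Finset.mem_sdiff.mp (this hx)).2
  refine ⟨?_, ?_, ?_⟩
  · intro T' hT'
    rcases Finset.mem_insert.mp hT' with rfl | hT'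
    · exact ⟨hTV, hTc⟩
    · exact ⟨(h1 T' hT').1.trans (Finset.sdiff_subset), (h1 T' hT').2⟩
  · rw [Finset.biUnion_insert, h2, id]
    exact Finset.union_sdiff_of_subset hTV
  · intro T₁ h₁ T₂ h₂ hne
    rcases Finset.mem_insert.mp h₁ with e₁ | h₁' <;>
      rcases Finset.mem_insert.mp h₂ with e₂ | h₂'
    · exact absurd (e₁.trans e₂.symm) hne
    · exact e₁ ▸ (hdisj T₂ h₂').symm
    · exact e₂ ▸ hdisj T₁ h₁'
    · exact h3 T₁ h₁' T₂ h₂' hne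

/-- The unique member of a partition containing a given point. -/
lemma triPart_unique {V : Finset ℕ} {M : Finset (Finset ℕ)} {v : ℕ}
    (hM : M ∈ triPart V) {T₁ T₂ : Finset ℕ} (h₁ : T₁ ∈ M) (h₂ : T₂ ∈ M)
    (hv₁ : v ∈ T₁) (hv₂ : v ∈ T₂) : T₁ = T₂ := by
  rw [mem_triPart] at hM
  by_contra hne
  exact (Finset.disjoint_left.mp (hM.2.2 T₁ h₁ T₂ h₂ hne) hv₁) hv₂

lemma triPart_exists {V : Finset ℕ} {M : Finset (Finset ℕ)} {v : ℕ}
    (hM : M ∈ triPart V) (hv : v ∈ V) : ∃ T ∈ M, v ∈ T := by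
  rw [mem_triPart] at hM
  have : v ∈ M.biUnion id := hM.2.1 ▸ hv
  simpa using this

lemma triPart_empty : triPart ∅ = {∅} := by
  ext M
  rw [mem_triPart]
  simp only [Finset.mem_singleton]
  constructor
  · rintro ⟨h1, h2, h3⟩
    rw [Finset.eq_empty_iff_forall_notMem]
    intro T hT
    have hc := (h1 T hT).2
    have : T = ∅ := Finset.subset_empty.mp (h1 T hT).1
    subst this
    simp at hc
  · rintro rfl
    simp

lemma triPart_card : ∀ (c : ℕ) (V : Finset ℕ), V.card = 3 * c → (triPart V).card = pfun c := by
  intro c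
  induction c with
  | zero =>
    intro V hV
    have : V = ∅ := Finset.card_eq_zero.mp (by omega)
    subst this
    rw [triPart_empty]
    simp [pfun]
  | succ c ih =>
    intro V hV
    have hVne : V.Nonempty := Finset.card_pos.mp (by omega)
    set v := V.max' hVne with hv
    have hvV : v ∈ V := V.max'_mem hVne
    -- the fiber map
    set f : Finset (Finset ℕ) → Finset ℕ :=
      fun M => ((M.filter fun T => v ∈ T).biUnion id).erase v with hf
    have hfval : ∀ M ∈ triPart V, ∀ T₀ ∈ M, v ∈ T₀ → f M = T₀.erase v := by
      intro M hM T₀ hT₀ hvT₀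
      have hfilter : M.filter (fun T => v ∈ T) = {T₀} := by
        ext T
        simp only [Finset.mem_filter, Finset.mem_singleton]
        constructor
        · rintro ⟨hT, hvT⟩
          exact triPart_unique hM hT hT₀ hvT hvT₀
        · rintro rfl
          exact ⟨hT₀, hvT₀⟩
      rw [hf]
      simp [hfilter]
    have hmaps : ∀ M ∈ triPart V, f M ∈ (V.erase v).powersetCard 2 := by
      intro M hM
      obtain ⟨T₀, hT₀, hvT₀⟩ := triPart_exists hM hvV
      rw [hfval M hM T₀ hT₀ hvT₀, Finset.mem_powersetCard]
      have h1 := (mem_triPart.mp hM).1 T₀ hT₀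
      constructor
      · intro x hx
        rw [Finset.mem_erase] at hx ⊢
        exact ⟨hx.1, h1.1 hx.2⟩
      · rw [Finset.card_erase_of_mem hvT₀, h1.2]
    rw [Finset.card_eq_sum_card_fiberwise hmaps]
    have hfiber : ∀ pr ∈ (V.erase v).powersetCard 2,
        ((triPart V).filter fun M => f M = pr).card = pfun c := by
      intro pr hpr
      rw [Finset.mem_powersetCard] at hpr
      have hvpr : v ∉ pr := fun h => (Finset.mem_erase.mp (hpr.1 h)).1 rfl
      have hTV : insert v pr ⊆ V := by
        intro x hx
        rcases Finset.mem_insert.mp hx with rfl | hx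
        · exact hvV
        · exact (Finset.mem_erase.mp (hpr.1 hx)).2
      have hTc : (insert v pr).card = 3 := by
        rw [Finset.card_insert_of_notMem hvpr, hpr.2]
      have hsub : insert v pr ⊆ V := hTV
      have hVT : (V \ insert v pr).card = 3 * c := by
        rw [Finset.card_sdiff_of_subset hTV, hTc, hV]; omega
      rw [← ih (V \ insert v pr) hVT]
      apply Finset.card_bij (fun M _ => M.erase (insert v pr))
      · -- maps to
        intro M hM
        rw [Finset.mem_filter] at hM
        obtain ⟨hMtp, hfM⟩ := hM
        obtain ⟨T₀, hT₀, hvT₀⟩ := triPart_exists hMtp hvV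
        have : T₀ = insert v pr := by
          rw [hfval M hMtp T₀ hT₀ hvT₀] at hfM
          rw [← hfM, Finset.insert_erase hvT₀]
        subst this
        exact erase_mem_triPart hMtp hT₀
      · -- injective
        intro M₁ hM₁ M₂ hM₂ heq
        rw [Finset.mem_filter] at hM₁ hM₂
        have hmem : ∀ M, M ∈ triPart V → f M = pr → insert v pr ∈ M := by
          intro M hM hfM
          obtain ⟨T₀, hT₀, hvT₀⟩ := triPart_exists hM hvV
          have : T₀ = insert v pr := by
            rw [hfval M hM T₀ hT₀ hvT₀] at hfM
            rw [← hfM, Finset.insert_erase hvT₀]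
          exact this ▸ hT₀
        have h₁ := hmem M₁ hM₁.1 hM₁.2
        have h₂ := hmem M₂ hM₂.1 hM₂.2
        rw [← Finset.insert_erase h₁, ← Finset.insert_erase h₂, heq]
      · -- surjective
        intro N hN
        refine ⟨insert (insert v pr) N, ?_, ?_⟩
        · rw [Finset.mem_filter]
          have hins := insert_mem_triPart hTV hTc hN
          refine ⟨hins, ?_⟩
          have : v ∈ insert v pr := Finset.mem_insert_self v pr
          rw [hfval _ hins (insert v pr) (Finset.mem_insert_self _ _) this]
          rw [Finset.erase_insert hvpr]
        · have : insert v pr ∉ N := by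
            intro h
            have := (mem_triPart.mp hN).1 _ h
            have := this.1 (Finset.mem_insert_self v pr)
            exact (Finset.mem_sdiff.mp this).2 (Finset.mem_insert_self v pr)
          rw [Finset.erase_insert this]
    rw [Finset.sum_congr rfl hfiber, Finset.sum_const, Finset.card_powersetCard,
      Finset.card_erase_of_mem hvV, hV]
    show (3 * (c + 1) - 1).choose 2 * pfun c = pfun (c + 1)
    have : 3 * (c + 1) - 1 = 3 * c + 2 := by omega
    rw [this]
    rfl

lemma triPart_filter_le {V T : Finset ℕ} :
    ((triPart V).filter fun M => T ∈ M).card ≤ (triPart (V \ T)).card := by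
  apply Finset.card_le_card_of_injOn (fun M => M.erase T)
  · intro M hM
    rw [Finset.mem_coe, Finset.mem_filter] at hM
    exact erase_mem_triPart hM.1 hM.2
  · intro M₁ h₁ M₂ h₂ heq
    rw [Finset.mem_coe, Finset.mem_filter] at h₁ h₂
    rw [← Finset.insert_erase h₁.2, ← Finset.insert_erase h₂.2]
    exact congrArg (insert T) heq

lemma triPart_mem_card {V : Finset ℕ} {M : Finset (Finset ℕ)} {c : ℕ}
    (hV : V.card = 3 * c) (hM : M ∈ triPart V) : M.card = c := by
  rw [mem_triPart] at hM
  have h : (M.biUnion id).card = ∑ u ∈ M, (id u).card :=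
    Finset.card_biUnion (fun T hT T' hT' hne => hM.2.2 T hT T' hT' hne)
  rw [hM.2.1] at h
  have hsum : ∑ T ∈ M, (id T).card = ∑ T ∈ M, 3 :=
    Finset.sum_congr rfl fun T hT => (hM.1 T hT).2
  rw [hsum, Finset.sum_const, smul_eq_mul, hV] at h
  omega

lemma missing_bound {V : Finset ℕ} {c : ℕ} (hc : 0 < c) (hV : V.card = 3 * c)
    (G : Finset (Finset ℕ)) (hG : ∀ M ∈ triPart V, ∃ T ∈ M, T ∉ G) :
    Nat.choose (3 * c - 1) 2 ≤ ((V.powersetCard 3) \ G).card := by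
  obtain ⟨c', rfl⟩ : ∃ c', c = c' + 1 := ⟨c - 1, by omega⟩
  set Miss := (V.powersetCard 3) \ G with hMiss
  have hsub : triPart V ⊆ Miss.biUnion fun T => (triPart V).filter fun M => T ∈ M := by
    intro M hM
    obtain ⟨T, hTM, hTG⟩ := hG M hM
    rw [Finset.mem_biUnion]
    refine ⟨T, ?_, Finset.mem_filter.mpr ⟨hM, hTM⟩⟩
    rw [hMiss, Finset.mem_sdiff, Finset.mem_powersetCard]
    exact ⟨⟨((mem_triPart.mp hM).1 T hTM).1, ((mem_triPart.mp hM).1 T hTM).2⟩, hTG⟩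
  have h1 : (triPart V).card ≤ ∑ T ∈ Miss, ((triPart V).filter fun M => T ∈ M).card :=
    (Finset.card_le_card hsub).trans Finset.card_biUnion_le
  have h2 : ∀ T ∈ Miss, ((triPart V).filter fun M => T ∈ M).card ≤ pfun c' := by
    intro T hT
    rw [hMiss, Finset.mem_sdiff, Finset.mem_powersetCard] at hT
    have hcard : (V \ T).card = 3 * c' := by
      rw [Finset.card_sdiff_of_subset hT.1.1, hT.1.2, hV]; omega
    calc ((triPart V).filter fun M => T ∈ M).card
        ≤ (triPart (V \ T)).card := triPart_filter_le
      _ = pfun c' := triPart_card c' _ hcard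
  have h3 : (triPart V).card = Nat.choose (3 * c' + 2) 2 * pfun c' := by
    rw [triPart_card (c' + 1) V hV]; rfl
  have h4 : Nat.choose (3 * c' + 2) 2 * pfun c' ≤ Miss.card * pfun c' := by
    calc Nat.choose (3 * c' + 2) 2 * pfun c' = (triPart V).card := h3.symm
      _ ≤ ∑ T ∈ Miss, ((triPart V).filter fun M => T ∈ M).card := h1
      _ ≤ ∑ _T ∈ Miss, pfun c' := Finset.sum_le_sum h2
      _ = Miss.card * pfun c' := by rw [Finset.sum_const, smul_eq_mul]
  have h5 := Nat.le_of_mul_le_mul_right h4 (pfun_pos c')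
  have : 3 * (c' + 1) - 1 = 3 * c' + 2 := by omega
  rw [this]
  exact h5

theorem stmt_11 (n s l c : ℕ) (hs0 : 0 < s) (hl0 : 0 < l) (hc0 : 0 < c)
    (hcl : c + l = s) (hn : n = 2 * l + 3 * c)
    (F : Finset (Finset ℕ)) (hF : ∀ A ∈ F, A ⊆ ground n) (hsh : IsShifted n F)
    (hd : 0 < dF l F) (hnu : matchingNumber F < s) :
    Nat.choose (3 * c - 1) 2 ≤ yF n F 3 ∧
      (yF n F 3 = Nat.choose (3 * c - 1) 2 →
        (ground n).powersetCard 3 \ (Finset.Icc (2 * l + 1) n).powersetCard 3 ⊆ F) := by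
  have hd0 : ¬ DCond l F 0 := Nat.notMem_of_lt_sInf hd
  have hpairs : ∀ i ∈ Finset.Icc 1 l, ({i, 2 * l + 1 - i} : Finset ℕ) ∈ F := by
    intro i hi
    by_contra h
    exact hd0 (Or.inl ⟨Even.zero, ⟨i, by simpa using hi, by simpa using h⟩⟩)
  set B := Finset.Icc (2 * l + 1) n with hB
  have hBcard : B.card = 3 * c := by rw [hB, Nat.card_Icc]; omega
  have hG : ∀ M ∈ triPart B, ∃ T ∈ M, T ∉ F := by
    intro M hM
    by_contra hcon
    push_neg at hcon
    set pairsF := (Finset.Icc 1 l).image (fun i => ({i, 2 * l + 1 - i} : Finset ℕ)) with hpF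
    have hMsub : ∀ T ∈ M, T ⊆ B ∧ T.card = 3 := (mem_triPart.mp hM).1
    have hpair_mem : ∀ A ∈ pairsF, ∃ i, 1 ≤ i ∧ i ≤ l ∧ A = {i, 2 * l + 1 - i} := by
      intro A hA
      rw [hpF, Finset.mem_image] at hA
      obtain ⟨i, hi, rfl⟩ := hA
      rw [Finset.mem_Icc] at hi
      exact ⟨i, hi.1, hi.2, rfl⟩
    have hdisjPT : ∀ A ∈ pairsF, ∀ T ∈ M, Disjoint A T := by
      intro A hA T hT
      obtain ⟨i, hi1, hi2, rfl⟩ := hpair_mem A hA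
      rw [Finset.disjoint_left]
      intro x hx hxT
      have hxB : x ∈ B := (hMsub T hT).1 hxT
      rw [hB, Finset.mem_Icc] at hxB
      simp only [Finset.mem_insert, Finset.mem_singleton] at hx
      omega
    set MF := pairsF ∪ M with hMF
    have hsubF : MF ⊆ F := by
      intro A hA
      rcases Finset.mem_union.mp hA with hA | hA
      · obtain ⟨i, hi1, hi2, rfl⟩ := hpair_mem A hA
        exact hpairs i (Finset.mem_Icc.mpr ⟨hi1, hi2⟩)
      · exact hcon A hA
    have hpw : (MF : Set (Finset ℕ)).Pairwise fun A B => Disjoint A B := by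
      intro A hA B' hB' hne
      rw [Finset.mem_coe, hMF, Finset.mem_union] at hA hB'
      rcases hA with hA | hA <;> rcases hB' with hB' | hB'
      · obtain ⟨i, hi1, hi2, rfl⟩ := hpair_mem A hA
        obtain ⟨j, hj1, hj2, rfl⟩ := hpair_mem B' hB'
        have hij : i ≠ j := by
          rintro rfl; exact hne rfl
        rw [Finset.disjoint_left]
        intro x hx hx'
        simp only [Finset.mem_insert, Finset.mem_singleton] at hx hx'
        omega
      · exact hdisjPT A hA B' hB'
      · exact (hdisjPT B' hB' A hA).symm
      · exact (mem_triPart.mp hM).2.2 A hA B' hB' hne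
    have hcardp : pairsF.card = l := by
      rw [hpF, Finset.card_image_of_injOn, Nat.card_Icc]
      · omega
      · intro i hi j hj hij
        rw [Finset.mem_coe, Finset.mem_Icc] at hi hj
        have hij' : ({i, 2 * l + 1 - i} : Finset ℕ) = {j, 2 * l + 1 - j} := hij
        have : i ∈ ({j, 2 * l + 1 - j} : Finset ℕ) := by
          rw [← hij']; exact Finset.mem_insert_self _ _
        simp only [Finset.mem_insert, Finset.mem_singleton] at this
        omega
    have hdisjPM : Disjoint pairsF M := by
      rw [Finset.disjoint_left]
      intro A hA hAM
      obtain ⟨i, hi1, hi2, rfl⟩ := hpair_mem A hA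
      have : i ∈ B := (hMsub _ hAM).1 (Finset.mem_insert_self _ _)
      rw [hB, Finset.mem_Icc] at this
      omega
    have hcardM : M.card = c := triPart_mem_card hBcard hM
    have hcard : MF.card = l + c := by
      rw [hMF, Finset.card_union_of_disjoint hdisjPM, hcardp, hcardM]
    have hle : MF.card ≤ matchingNumber F := by
      unfold matchingNumber
      exact Finset.le_sup (Finset.mem_filter.mpr ⟨Finset.mem_powerset.mpr hsubF, hpw⟩)
    omega
  have hMissB : Nat.choose (3 * c - 1) 2 ≤ ((B.powersetCard 3) \ F).card :=
    missing_bound hc0 hBcard F hG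
  set P3 := (ground n).powersetCard 3 with hP3
  have hyF : yF n F 3 = (P3 \ F).card := by
    have h1 : (P3 \ F).card + (P3 ∩ F).card = P3.card :=
      Finset.card_sdiff_add_card_inter P3 F
    have hP3card : P3.card = n.choose 3 := by
      rw [hP3, Finset.card_powersetCard, ground, Nat.card_Icc]
      norm_num
    have h2 : P3 ∩ F = F ∩ P3 := Finset.inter_comm _ _
    rw [h2] at h1
    rw [yF, layer, ← hP3]
    omega
  have hsubMiss : (B.powersetCard 3) \ F ⊆ P3 \ F := by
    intro T hT
    rw [Finset.mem_sdiff, Finset.mem_powersetCard] at hT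
    rw [Finset.mem_sdiff, hP3, Finset.mem_powersetCard]
    refine ⟨⟨hT.1.1.trans ?_, hT.1.2⟩, hT.2⟩
    intro x hx
    rw [hB, Finset.mem_Icc] at hx
    rw [ground, Finset.mem_Icc]
    omega
  have hineq : Nat.choose (3 * c - 1) 2 ≤ yF n F 3 := by
    rw [hyF]
    exact hMissB.trans (Finset.card_le_card hsubMiss)
  refine ⟨hineq, ?_⟩
  intro heq
  have hcardle : (P3 \ F).card ≤ ((B.powersetCard 3) \ F).card := by
    rw [← hyF, heq]; exact hMissB
  have heqset : (B.powersetCard 3) \ F = P3 \ F :=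
    Finset.eq_of_subset_of_card_le hsubMiss hcardle
  intro A hA
  rw [Finset.mem_sdiff] at hA
  by_contra hAF
  have : A ∈ P3 \ F := Finset.mem_sdiff.mpr ⟨hA.1, hAF⟩
  rw [← heqset, Finset.mem_sdiff] at this
  exact hA.2 this.1
end
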